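/- Let $(\mathcal{A},[~,~]_\mathcal{A},N_\mathcal{A})$ and $(\mathcal{A}',[~,~]_{\mathcal{A}'},N_{\mathcal{A}'})$ be Nijenhuis mock-Lie algebras with linear maps $\rho_\mathcal{A}:\mathcal{A}\to End(\mathcal{A}')$, $\rho_{\mathcal{A}'}:\mathcal{A}'\to End(\mathcal{A})$. Define on $\mathcal{A}\oplus\mathcal{A}'$ the bracket $[(a+x),(b+y)]_\diamond = [a,b]_\mathcal{A} + \rho_{\mathcal{A}'}(y)a + \rho_{\mathcal{A}'}(x)b + [x,y]_{\mathcal{A}'} + \rho_\mathcal{A}(a)y + \rho_\mathcal{A}(b)x$ and the map $(N_\mathcal{A}+N_{\mathcal{A}'})(a+x)=N_\mathcal{A}(a)+N_{\mathcal{A}'}(x)$. Then $(\mathcal{A}\oplus\mathcal{A}',[~,~]_\diamond,N_\mathcal{A}+N_{\mathcal{A}'})$ is a Nijenhuis mock-Lie algebra if and only if $((\mathcal{A},N_\mathcal{A}),(\mathcal{A}',N_{\mathcal{A}'}),\rho_\mathcal{A},\rho_{\mathcal{A}'})$ is a matched pair of Nijenhuis mock-Lie algebras. -/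
import Mathlib


/-- The bracket `[(a+x),(b+y)]_⋄` on `A ⊕ A'` built from two brackets and two actions. -/
def diamondBracket {K A A' : Type*} [Field K] [AddCommGroup A] [Module K A]
    [AddCommGroup A'] [Module K A']
    (bA : A →ₗ[K] A →ₗ[K] A) (bA' : A' →ₗ[K] A' →ₗ[K] A')
    (ρA : A →ₗ[K] A' →ₗ[K] A') (ρA' : A' →ₗ[K] A →ₗ[K] A)
    (p q : A × A') : A × A' :=
  (bA p.1 q.1 + ρA' q.2 p.1 + ρA' p.2 q.1,
   bA' p.2 q.2 + ρA p.1 q.2 + ρA q.1 p.2)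

/-- `(N_A + N_{A'})(a + x) = N_A(a) + N_{A'}(x)`. -/
def sumMap {K A A' : Type*} [Field K] [AddCommGroup A] [Module K A]
    [AddCommGroup A'] [Module K A']
    (NA : A →ₗ[K] A) (NA' : A' →ₗ[K] A') (p : A × A') : A × A' :=
  (NA p.1, NA' p.2)

/-- `(A ⊕ A', [,]_⋄, N_A + N_{A'})` is a Nijenhuis mock-Lie algebra iff
`((A,N_A),(A',N_{A'}),ρ_A,ρ_{A'})` is a matched pair of Nijenhuis mock-Lie algebras. -/
theorem stmt12 {K A A' : Type*} [Field K] [CharZero K]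
    [AddCommGroup A] [Module K A] [AddCommGroup A'] [Module K A']
    (bA : A →ₗ[K] A →ₗ[K] A) (bA' : A' →ₗ[K] A' →ₗ[K] A')
    (NA : A →ₗ[K] A) (NA' : A' →ₗ[K] A')
    (ρA : A →ₗ[K] A' →ₗ[K] A') (ρA' : A' →ₗ[K] A →ₗ[K] A)
    (hcommA : ∀ x y : A, bA x y = bA y x)
    (hjacA : ∀ x y z : A, bA x (bA y z) + bA y (bA z x) + bA z (bA x y) = 0)
    (hNA : ∀ x y : A,
      bA (NA x) (NA y) + NA (NA (bA x y)) = NA (bA (NA x) y) + NA (bA x (NA y)))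
    (hcommA' : ∀ x y : A', bA' x y = bA' y x)
    (hjacA' : ∀ x y z : A', bA' x (bA' y z) + bA' y (bA' z x) + bA' z (bA' x y) = 0)
    (hNA' : ∀ x y : A',
      bA' (NA' x) (NA' y) + NA' (NA' (bA' x y)) =
        NA' (bA' (NA' x) y) + NA' (bA' x (NA' y))) :
    ((∀ p q : A × A',
        diamondBracket bA bA' ρA ρA' p q = diamondBracket bA bA' ρA ρA' q p) ∧
     (∀ p q r : A × A',
        diamondBracket bA bA' ρA ρA' p (diamondBracket bA bA' ρA ρA' q r) +
        diamondBracket bA bA' ρA ρA' q (diamondBracket bA bA' ρA ρA' r p) +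
        diamondBracket bA bA' ρA ρA' r (diamondBracket bA bA' ρA ρA' p q) = 0) ∧
     (∀ p q : A × A',
        diamondBracket bA bA' ρA ρA' (sumMap NA NA' p) (sumMap NA NA' q) +
          sumMap NA NA' (sumMap NA NA' (diamondBracket bA bA' ρA ρA' p q)) =
        sumMap NA NA' (diamondBracket bA bA' ρA ρA' (sumMap NA NA' p) q) +
          sumMap NA NA' (diamondBracket bA bA' ρA ρA' p (sumMap NA NA' q)))) ↔
    ((∀ (a c : A) (x : A'), ρA (bA a c) x = - ρA a (ρA c x) - ρA c (ρA a x)) ∧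
     (∀ (x y : A') (a : A), ρA' (bA' x y) a = - ρA' x (ρA' y a) - ρA' y (ρA' x a)) ∧
     (∀ (a : A) (x y : A'),
        ρA a (bA' x y) + bA' (ρA a x) y + bA' x (ρA a y) +
          ρA (ρA' y a) x + ρA (ρA' x a) y = 0) ∧
     (∀ (x : A') (a c : A),
        ρA' x (bA a c) + bA (ρA' x a) c + bA a (ρA' x c) +
          ρA' (ρA c x) a + ρA' (ρA a x) c = 0) ∧
     (∀ (a : A) (x : A'),
        ρA (NA a) (NA' x) + NA' (NA' (ρA a x)) =
          NA' (ρA (NA a) x) + NA' (ρA a (NA' x))) ∧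
     (∀ (x : A') (a : A),
        ρA' (NA' x) (NA a) + NA (NA (ρA' x a)) =
          NA (ρA' (NA' x) a) + NA (ρA' x (NA a)))) := by
  constructor
  · rintro ⟨h1, h2, h3⟩
    refine ⟨?_, ?_, ?_, ?_, ?_, ?_⟩
    · intro a c x
      have h := h2 (a,0) (c,0) (0,x)
      simp [diamondBracket, Prod.ext_iff] at h
      linear_combination (norm := abel1) h.2
    · intro x y a
      have h := h2 (0,x) (0,y) (a,0)
      simp [diamondBracket, Prod.ext_iff] at h
      linear_combination (norm := abel1) h.1
    · intro a x y
      have h := h2 (0,x) (0,y) (a,0)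
      simp [diamondBracket, Prod.ext_iff] at h
      linear_combination (norm := abel1) h.2 + hcommA' (ρA a x) y
    · intro x a c
      have h := h2 (a,0) (c,0) (0,x)
      simp [diamondBracket, Prod.ext_iff] at h
      linear_combination (norm := abel1) h.1 + hcommA (ρA' x a) c
    · intro a x
      have h := h3 (a,0) (0,x)
      simp [diamondBracket, sumMap, Prod.ext_iff] at h
      linear_combination (norm := abel1) h.2
    · intro x a
      have h := h3 (a,0) (0,x)
      simp [diamondBracket, sumMap, Prod.ext_iff] at h
      linear_combination (norm := abel1) h.1
  · rintro ⟨c1, c2, c3, c4, c5, c6⟩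
    refine ⟨?_, ?_, ?_⟩
    · rintro ⟨a, x⟩ ⟨b, y⟩
      simp only [diamondBracket, Prod.ext_iff]
      exact ⟨by linear_combination (norm := abel1) hcommA a b,
             by linear_combination (norm := abel1) hcommA' x y⟩
    · rintro ⟨a, x⟩ ⟨b, y⟩ ⟨c, z⟩
      simp only [diamondBracket, Prod.ext_iff, map_add, LinearMap.add_apply,
        Prod.fst_add, Prod.snd_add, Prod.fst_zero, Prod.snd_zero]
      constructor
      · linear_combination (norm := abel1) hjacA a b c + c4 x b c + c4 y c a +
          c4 z a b + c2 y z a + c2 z x b + c2 x y c -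
          hcommA (ρA' x b) c - hcommA (ρA' y c) a - hcommA (ρA' z a) b
      · linear_combination (norm := abel1) hjacA' x y z + c3 a y z + c3 b z x +
          c3 c x y + c1 b c x + c1 c a y + c1 a b z -
          hcommA' (ρA a y) z - hcommA' (ρA b z) x - hcommA' (ρA c x) y
    · rintro ⟨a, x⟩ ⟨b, y⟩
      simp only [diamondBracket, sumMap, Prod.ext_iff, map_add, LinearMap.add_apply,
        Prod.fst_add, Prod.snd_add]
      exact ⟨by linear_combination (norm := abel1) hNA a b + c6 x b + c6 y a,
             by linear_combination (norm := abel1) hNA' x y + c5 a y + c5 b x⟩
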